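/- For every finite group G and subgroup H ≤ G, there exists a common system of representatives for the left cosets and the right cosets of H in G, i.e. elements φ₁,...,φ_m with m = [G:H] such that {φ_l H} are all the left cosets and {H φ_l} are all the right cosets. -/
import Mathlib


/-- P. Hall's theorem: every subgroup `H` of a finite group `G` admits a common system
of representatives for the left cosets and the right cosets of `H` in `G`. -/
theorem exists_common_left_right_transversal
    {G : Type*} [Group G] [Fintype G] (H : Subgroup G) :
    ∃ φ : Fin H.index → G,
      Function.Bijective (fun l => (QuotientGroup.mk (φ l) : G ⧸ H)) ∧
      Function.Bijective (fun l =>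
        (Quotient.mk (QuotientGroup.rightRel H) (φ l))) := by
  classical
  -- left coset fibers and right coset fibers
  set L : G ⧸ H → Finset G := fun q => Finset.univ.filter (fun g => (QuotientGroup.mk g : G ⧸ H) = q) with hL
  set R : Quotient (QuotientGroup.rightRel H) → Finset G :=
    fun q => Finset.univ.filter (fun g => Quotient.mk (QuotientGroup.rightRel H) g = q) with hR
  have hLcard : ∀ q, (L q).card = Fintype.card H := by
    intro q
    obtain ⟨a, rfl⟩ := q.exists_rep
    rw [← Finset.card_univ]
    apply Finset.card_bij (fun g _ => (⟨a⁻¹ * g, by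
      have hg : (QuotientGroup.mk g : G ⧸ H) = QuotientGroup.mk a := by
        simpa [hL] using (by assumption : g ∈ L (QuotientGroup.mk a))
      exact (QuotientGroup.eq.mp hg.symm)⟩ : H))
    · intros; exact Finset.mem_univ _
    · intro g₁ h₁ g₂ h₂ h
      have := congrArg Subtype.val h
      simpa using this
    · intro h _
      refine ⟨a * h, ?_, ?_⟩
      · simp [hL, QuotientGroup.eq, h.2]
      · simp
  have hRcard : ∀ q, (R q).card = Fintype.card H := by
    intro q
    obtain ⟨a, rfl⟩ := q.exists_rep
    rw [← Finset.card_univ]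
    apply Finset.card_bij (fun g _ => (⟨g * a⁻¹, by
      have hg : Quotient.mk (QuotientGroup.rightRel H) g = Quotient.mk _ a := by
        simpa [hR] using (by assumption : g ∈ R (Quotient.mk _ a))
      have h2 : a * g⁻¹ ∈ H := QuotientGroup.rightRel_apply.mp (Quotient.exact hg)
      simpa using H.inv_mem h2⟩ : H))
    · intros; exact Finset.mem_univ _
    · intro g₁ h₁ g₂ h₂ h
      have := congrArg Subtype.val h
      simpa using this
    · intro h _
      refine ⟨h * a, ?_, ?_⟩
      · simp only [hR, Finset.mem_filter, Finset.mem_univ, true_and]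
        exact Quotient.sound (QuotientGroup.rightRel_apply.mpr (by
          simp [mul_assoc, H.inv_mem h.2]))
      · simp
  -- the bipartite relation
  set t : G ⧸ H → Finset (Quotient (QuotientGroup.rightRel H)) :=
    fun q => (L q).image (fun g => Quotient.mk (QuotientGroup.rightRel H) g) with ht
  have hall : ∀ s : Finset (G ⧸ H), s.card ≤ (s.biUnion t).card := by
    intro s
    have hpos : 0 < Fintype.card H := Fintype.card_pos
    have hsub : s.biUnion L ⊆ (s.biUnion t).biUnion R := by
      intro g hg
      obtain ⟨q, hq, hgq⟩ := Finset.mem_biUnion.mp hg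
      apply Finset.mem_biUnion.mpr
      refine ⟨Quotient.mk (QuotientGroup.rightRel H) g, ?_, ?_⟩
      · exact Finset.mem_biUnion.mpr ⟨q, hq, Finset.mem_image_of_mem _ hgq⟩
      · simp only [hR, Finset.mem_filter, Finset.mem_univ, true_and]
    have hdisL : (s : Set (G ⧸ H)).PairwiseDisjoint L := by
      intro x _ y _ hxy
      simp only [Finset.disjoint_left, hL, Finset.mem_filter]
      rintro g ⟨_, rfl⟩ ⟨_, h⟩
      exact hxy h
    have hdisR : ((s.biUnion t : Finset _) : Set _).PairwiseDisjoint R := by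
      intro x _ y _ hxy
      simp only [Finset.disjoint_left, hR, Finset.mem_filter]
      rintro g ⟨_, rfl⟩ ⟨_, h⟩
      exact hxy h
    have h1 : (s.biUnion L).card = s.card * Fintype.card H := by
      rw [Finset.card_biUnion (fun x hx y hy hxy => hdisL hx hy hxy)]
      simp [hLcard, Finset.sum_const, mul_comm]
    have h2 : ((s.biUnion t).biUnion R).card = (s.biUnion t).card * Fintype.card H := by
      rw [Finset.card_biUnion (fun x hx y hy hxy => hdisR hx hy hxy)]
      simp [hRcard, Finset.sum_const, mul_comm]
    have := Finset.card_le_card hsub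
    rw [h1, h2] at this
    exact Nat.le_of_mul_le_mul_right this hpos
  obtain ⟨f, hfinj, hf⟩ := (Finset.all_card_le_biUnion_card_iff_exists_injective t).mp hall
  have hfbij : Function.Bijective f := by
    refine (Fintype.bijective_iff_injective_and_card f).mpr ⟨hfinj, ?_⟩
    rw [QuotientGroup.card_quotient_rightRel]
  -- choose representatives
  have hrep : ∀ q : G ⧸ H, ∃ g : G, (QuotientGroup.mk g : G ⧸ H) = q ∧
      Quotient.mk (QuotientGroup.rightRel H) g = f q := by
    intro q
    obtain ⟨g, hg, hg2⟩ := Finset.mem_image.mp (hf q)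
    have : (QuotientGroup.mk g : G ⧸ H) = q := by simpa [hL] using hg
    exact ⟨g, this, hg2⟩
  choose g hg1 hg2 using hrep
  have hcard : Fintype.card (G ⧸ H) = H.index := by
    rw [Subgroup.index]
    exact (Nat.card_eq_fintype_card).symm
  let e : Fin H.index ≃ G ⧸ H := (Fintype.equivFinOfCardEq hcard).symm
  refine ⟨fun l => g (e l), ?_, ?_⟩
  · have : (fun l => (QuotientGroup.mk (g (e l)) : G ⧸ H)) = fun l => e l := by
      funext l; exact hg1 (e l)
    rw [this]
    exact e.bijective
  · have : (fun l => Quotient.mk (QuotientGroup.rightRel H) (g (e l))) = fun l => f (e l) := by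
      funext l; exact hg2 (e l)
    rw [this]
    exact hfbij.comp e.bijective
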